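/- Let A_K ∈ ℝ^{n×n}, let W = ⟨c_ω, G_ω⟩ ⊂ ℝ^n be a zonotope with G_ω ∈ ℝ^{n×D_ω}, let s be a positive integer, and set Ḡ = [G_ω A_K G_ω A_K² G_ω ⋯ A_K^s G_ω] ∈ ℝ^{n×D} with D = (s+1) D_ω. Put D̄ = D + D_ω + 1 and V = [I_{D̄} −I_{D̄}]. Suppose c ∈ ℝ^n, δ ∈ ℝ^D with δ ≥ 0 componentwise, Δ = diag(δ), and Φ ∈ ℝ^{2D̄×D} satisfy: Ḡ Φᵀ Vᵀ = [ (−c + A_K c + c_ω) A_K Ḡ Δ G_ω ], Φ ≥ 0 entrywise, and Φᵀ 1_{2D̄} ≤ δ componentwise. Then the scaled zonotope ⟨c, Ḡ Δ⟩ is robust positively invariant for the error dynamics z⁺ = A_K z + w with w ∈ W, i.e., A_K ⟨c, Ḡ Δ⟩ ⊕ W ⊆ ⟨c, Ḡ Δ⟩. -/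

import Mathlib

open Matrix Pointwise BigOperators

/-- The zonotope `⟨c, G⟩ = {c + Gξ : ‖ξ‖_∞ ≤ 1}` (sup norm on the Pi type). -/
def zonotope {d D : Type*} [Fintype d] [Fintype D]
    (c : d → ℝ) (G : Matrix d D ℝ) : Set (d → ℝ) :=
  {x | ∃ ξ : D → ℝ, ‖ξ‖ ≤ 1 ∧ x = c + G.mulVec ξ}

/-- Proposition 5: if `(c, δ, Φ)` satisfy the linear feasibility conditions
`Ḡ Φᵀ Vᵀ = [ (−c + A_K c + c_ω)  A_K Ḡ Δ  G_ω ]`, `Φ ≥ 0`, `Φᵀ 1 ≤ δ`,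
where `Ḡ = [G_ω  A_K G_ω ⋯ A_K^s G_ω]` (columns indexed by `Fin (s+1) × Fin Dω`)
and the `D̄ = 1 + D + Dω` block columns are indexed by
`Unit ⊕ (Fin (s+1) × Fin Dω) ⊕ Fin Dω`, then `⟨c, ḠΔ⟩` is RPI:
`A_K ⟨c, ḠΔ⟩ ⊕ W ⊆ ⟨c, ḠΔ⟩`. -/
theorem zonotopic_rpi
    {n Dω : ℕ} (s : ℕ) (hs : 1 ≤ s)
    (AK : Matrix (Fin n) (Fin n) ℝ)
    (cω : Fin n → ℝ) (Gω : Matrix (Fin n) (Fin Dω) ℝ)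
    (Gbar : Matrix (Fin n) (Fin (s + 1) × Fin Dω) ℝ)
    (hGbar : Gbar = Matrix.of fun r lk => ((AK ^ (lk.1 : ℕ)) * Gω) r lk.2)
    (c : Fin n → ℝ)
    (δ : Fin (s + 1) × Fin Dω → ℝ) (hδ : ∀ j, 0 ≤ δ j)
    (Φ : Matrix ((Unit ⊕ (Fin (s + 1) × Fin Dω) ⊕ Fin Dω)
                 ⊕ (Unit ⊕ (Fin (s + 1) × Fin Dω) ⊕ Fin Dω))
        (Fin (s + 1) × Fin Dω) ℝ)
    (hΦeq : Gbar * (Φᵀ * (Matrix.fromCols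
        (1 : Matrix (Unit ⊕ (Fin (s + 1) × Fin Dω) ⊕ Fin Dω)
             (Unit ⊕ (Fin (s + 1) × Fin Dω) ⊕ Fin Dω) ℝ) (-1))ᵀ :
          Matrix (Fin (s + 1) × Fin Dω) (Unit ⊕ (Fin (s + 1) × Fin Dω) ⊕ Fin Dω) ℝ)
      = Matrix.of fun r j =>
          Sum.elim (fun _ : Unit => -c r + AK.mulVec c r + cω r)
            (Sum.elim (fun lk => (AK * Gbar * Matrix.diagonal δ) r lk)
                      (fun k => Gω r k)) j)
    (hΦpos : ∀ r j, 0 ≤ Φ r j)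
    (hΦsum : ∀ j, ∑ r, Φ r j ≤ δ j) :
    (AK.mulVec '' zonotope c (Gbar * Matrix.diagonal δ)) + zonotope cω Gω
      ⊆ zonotope c (Gbar * Matrix.diagonal δ) := by
  rintro x hx
  rw [Set.mem_add] at hx
  obtain ⟨a, ha, b, hb, rfl⟩ := hx
  obtain ⟨x0, ⟨ξ, hξ, rfl⟩, rfl⟩ := ha
  obtain ⟨η, hη, rfl⟩ := hb
  have hξb : ∀ j, |ξ j| ≤ 1 := fun j => by
    have := (norm_le_pi_norm ξ j).trans hξ
    simpa using this
  have hηb : ∀ k, |η k| ≤ 1 := fun k => by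
    have := (norm_le_pi_norm η k).trans hη
    simpa using this
  set u : (Unit ⊕ (Fin (s + 1) × Fin Dω) ⊕ Fin Dω) → ℝ :=
    Sum.elim (fun _ => (1:ℝ)) (Sum.elim ξ η) with hu_def
  have hub : ∀ i, |u i| ≤ 1 := by
    rintro (i | j | k) <;> simp [u, hξb, hηb]
  set e : (Unit ⊕ (Fin (s + 1) × Fin Dω) ⊕ Fin Dω)
        ⊕ (Unit ⊕ (Fin (s + 1) × Fin Dω) ⊕ Fin Dω) → ℝ :=
    Sum.elim u (fun i => - u i) with he_def
  set ξ' : Fin (s + 1) × Fin Dω → ℝ := Φᵀ.mulVec e with hξ'_def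
  have heb : ∀ r, |e r| ≤ 1 := by
    rintro (r | r) <;> simpa [e] using hub r
  have hbound : ∀ j, |ξ' j| ≤ δ j := by
    intro j
    calc |ξ' j| = |∑ r, Φ r j * e r| := by
          simp [ξ', Matrix.mulVec, dotProduct, Matrix.transpose_apply]
      _ ≤ ∑ r, |Φ r j * e r| := Finset.abs_sum_le_sum_abs _ _
      _ ≤ ∑ r, Φ r j := Finset.sum_le_sum fun r _ => by
            rw [abs_mul, abs_of_nonneg (hΦpos r j)]
            exact mul_le_of_le_one_right (hΦpos r j) (heb r)
      _ ≤ δ j := hΦsum j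
  set ζ : Fin (s + 1) × Fin Dω → ℝ :=
    fun j => if δ j = 0 then 0 else ξ' j / δ j with hζ_def
  have hζb : ∀ j, |ζ j| ≤ 1 := by
    intro j
    by_cases h : δ j = 0
    · simp [ζ, h]
    · have hpos : 0 < δ j := lt_of_le_of_ne (hδ j) (Ne.symm h)
      simp only [ζ, if_neg h, abs_div, abs_of_pos hpos]
      rw [div_le_one hpos]; exact hbound j
  have hΔζ : (Matrix.diagonal δ).mulVec ζ = ξ' := by
    funext j
    rw [Matrix.mulVec_diagonal]
    by_cases h : δ j = 0
    · have h0 : ξ' j = 0 := abs_nonpos_iff.mp (h ▸ hbound j)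
      simp [ζ, h, h0]
    · simp only [ζ, if_neg h]; field_simp
  -- key identity from hΦeq
  have key := congrArg (fun M => Matrix.mulVec M u) hΦeq
  have hVt : ((Matrix.fromCols
      (1 : Matrix (Unit ⊕ (Fin (s + 1) × Fin Dω) ⊕ Fin Dω)
           (Unit ⊕ (Fin (s + 1) × Fin Dω) ⊕ Fin Dω) ℝ) (-1))ᵀ).mulVec u = e := by
    rw [Matrix.transpose_fromCols, Matrix.fromRows_mulVec]
    simp only [Matrix.transpose_one, Matrix.transpose_neg, Matrix.one_mulVec,
      Matrix.neg_mulVec, Matrix.one_mulVec, he_def]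
    rfl
  have hLHS : (Gbar * (Φᵀ * (Matrix.fromCols
      (1 : Matrix (Unit ⊕ (Fin (s + 1) × Fin Dω) ⊕ Fin Dω)
           (Unit ⊕ (Fin (s + 1) × Fin Dω) ⊕ Fin Dω) ℝ) (-1))ᵀ :
        Matrix (Fin (s + 1) × Fin Dω) (Unit ⊕ (Fin (s + 1) × Fin Dω) ⊕ Fin Dω) ℝ)).mulVec u
      = Gbar.mulVec ξ' := by
    rw [← Matrix.mulVec_mulVec]
    congr 1
    have h := Matrix.mulVec_mulVec u Φᵀ (Matrix.fromCols
      (1 : Matrix (Unit ⊕ (Fin (s + 1) × Fin Dω) ⊕ Fin Dω)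
           (Unit ⊕ (Fin (s + 1) × Fin Dω) ⊕ Fin Dω) ℝ) (-1))ᵀ
    rw [hVt] at h
    exact h.symm
  have hRHS : (Matrix.of fun r j =>
      Sum.elim (fun _ : Unit => -c r + AK.mulVec c r + cω r)
        (Sum.elim (fun lk => (AK * Gbar * Matrix.diagonal δ) r lk)
                  (fun k => Gω r k)) j
        : Matrix (Fin n) (Unit ⊕ (Fin (s + 1) × Fin Dω) ⊕ Fin Dω) ℝ).mulVec u
      = fun r => (-c r + AK.mulVec c r + cω r)
          + (AK * Gbar * Matrix.diagonal δ).mulVec ξ r + Gω.mulVec η r := by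
    funext r
    simp [Matrix.mulVec, dotProduct, Fintype.sum_sum_type, u]
    ring
  rw [hLHS, hRHS] at key
  refine ⟨ζ, ?_, ?_⟩
  · rw [pi_norm_le_iff_of_nonneg zero_le_one]
    intro j; simpa using hζb j
  · have hmv : (Gbar * Matrix.diagonal δ).mulVec ζ = Gbar.mulVec ξ' := by
      rw [← Matrix.mulVec_mulVec, hΔζ]
    funext r
    have h1 : (AK * Gbar * Matrix.diagonal δ).mulVec ξ
        = AK.mulVec ((Gbar * Matrix.diagonal δ).mulVec ξ) := by
      rw [Matrix.mul_assoc, ← Matrix.mulVec_mulVec]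
    have h2 := congrFun key r
    simp only [Pi.add_apply, hmv, Matrix.mulVec_add, h1] at *
    rw [h2]
    ring
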